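/- Let k be a field of prime characteristic p with p ≡ 2 (mod 15) or p ≡ 13 (mod 15). Then for every nonnegative integer e, the dimension over k of k[X,Y]/(X^{p^e}, Y^{p^e}, X^{15} − Y^{15}) equals 15·p^e − 14 if e ≡ 0 (mod 4), equals 15·p^e − 26 if e ≡ 1 (mod 4), equals 15·p^e − 44 if e ≡ 2 (mod 4), and equals 15·p^e − 56 if e ≡ 3 (mod 4). -/

import Mathlib

open MvPolynomial
noncomputable section
namespace Stmt7Aux

variable {k : Type*} [Field k]

def SS (q : ℕ) : Finset (ℕ × ℕ) :=
  (Finset.range 15 ×ˢ Finset.range q).filter fun v => v.1 + 15 * (v.2 / 15) < q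

lemma mem_SS {q : ℕ} {v : ℕ × ℕ} :
    v ∈ SS q ↔ v.1 < 15 ∧ v.2 < q ∧ v.1 + 15 * (v.2 / 15) < q := by
  simp [SS, Finset.mem_filter, Finset.mem_product, and_assoc]

variable (k) in
def mon (a b : ℕ) : MvPolynomial (Fin 2) k := X 0 ^ a * X 1 ^ b

variable (k) in
def Igen (q : ℕ) : Ideal (MvPolynomial (Fin 2) k) :=
  Ideal.span {(X 0 : MvPolynomial (Fin 2) k) ^ q, X 1 ^ q, X 0 ^ 15 - X 1 ^ 15}

def rep (a b : ℕ) : ℕ × ℕ := (a % 15, b + 15 * (a / 15))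

variable (k) in
def FF (q : ℕ) (v : ℕ × ℕ) : (↥(SS q) → k) :=
  if h : v ∈ SS q then Pi.single (⟨v, h⟩ : ↥(SS q)) 1 else 0

variable (k) in
def phi (q : ℕ) : MvPolynomial (Fin 2) k →ₗ[k] (↥(SS q) → k) :=
  (basisMonomials (Fin 2) k).constr k fun m => FF k q (rep (m 0) (m 1))

lemma monomial_eq_mon (m : Fin 2 →₀ ℕ) :
    (monomial m 1 : MvPolynomial (Fin 2) k) = mon k (m 0) (m 1) := by
  rw [monomial_eq, C_1, one_mul, mon]
  rw [Finsupp.prod_fintype _ _ (fun i => pow_zero _)]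
  simp [Fin.prod_univ_two]

lemma phi_monomial (q : ℕ) (m : Fin 2 →₀ ℕ) :
    phi k q (monomial m 1) = FF k q (rep (m 0) (m 1)) := by
  have h : (monomial m 1 : MvPolynomial (Fin 2) k) = basisMonomials (Fin 2) k m := by
    rw [coe_basisMonomials]
  rw [h, phi, Module.Basis.constr_basis]

lemma mon_eq_monomial (a b : ℕ) :
    mon k a b = monomial (Finsupp.single 0 a + Finsupp.single 1 b) 1 := by
  rw [monomial_eq_mon]
  congr 1 <;> simp [Finsupp.single_apply]

lemma phi_mon (q a b : ℕ) : phi k q (mon k a b) = FF k q (rep a b) := by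
  rw [mon_eq_monomial, phi_monomial]
  simp [Finsupp.single_apply]

lemma rep_xq_dead (a b q : ℕ) : rep (a + q) b ∉ SS q := by
  rw [rep, mem_SS]
  have h1 : b + 15 * ((a + q) / 15) = (b % 15) + 15 * (b / 15 + (a+q)/15) := by omega
  push_neg; intro _ _; rw [h1]; omega

lemma rep_yq_dead (a b q : ℕ) : rep a (b + q) ∉ SS q := by
  rw [rep, mem_SS]; push_neg; intro _; omega

lemma rep_bin (a b : ℕ) : rep (a + 15) b = rep a (b + 15) := by
  rw [rep, rep, Prod.mk.injEq]; omega

lemma mon_mul_mon (a b c d : ℕ) : mon k a b * mon k c d = mon k (a+c) (b+d) := by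
  rw [mon, mon, mon, pow_add, pow_add]; ring

lemma phi_vanish (q : ℕ) {z : MvPolynomial (Fin 2) k} (hz : z ∈ Igen k q) :
    phi k q z = 0 := by
  have key : ∀ (g : MvPolynomial (Fin 2) k),
      ∀ f ∈ ({(X 0 : MvPolynomial (Fin 2) k) ^ q, X 1 ^ q, X 0 ^ 15 - X 1 ^ 15} :
        Set (MvPolynomial (Fin 2) k)), phi k q (g * f) = 0 := by
    intro g f hf
    induction g using MvPolynomial.induction_on' with
    | add u v ihu ihv => rw [add_mul, map_add, ihu, ihv, add_zero]
    | monomial m c =>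
      have hmc : (monomial m c : MvPolynomial (Fin 2) k) = c • mon k (m 0) (m 1) := by
        rw [← monomial_eq_mon, smul_monomial, smul_eq_mul, mul_one]
      rcases hf with rfl | rfl | rfl
      · have : (monomial m c : MvPolynomial (Fin 2) k) * X 0 ^ q
            = c • mon k (m 0 + q) (m 1) := by
          rw [hmc, smul_mul_assoc]
          congr 1
          rw [show (X 0 ^ q : MvPolynomial (Fin 2) k) = mon k q 0 by simp [mon],
            mon_mul_mon, add_zero]
        rw [this, map_smul, phi_mon, FF, dif_neg (rep_xq_dead _ _ _), smul_zero]
      · have : (monomial m c : MvPolynomial (Fin 2) k) * X 1 ^ q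
            = c • mon k (m 0) (m 1 + q) := by
          rw [hmc, smul_mul_assoc]
          congr 1
          rw [show (X 1 ^ q : MvPolynomial (Fin 2) k) = mon k 0 q by simp [mon],
            mon_mul_mon, add_zero]
        rw [this, map_smul, phi_mon, FF, dif_neg (rep_yq_dead _ _ _), smul_zero]
      · have : (monomial m c : MvPolynomial (Fin 2) k) * (X 0 ^ 15 - X 1 ^ 15)
            = c • mon k (m 0 + 15) (m 1) - c • mon k (m 0) (m 1 + 15) := by
          rw [hmc, smul_mul_assoc, mul_sub, smul_sub]
          refine congrArg₂ (· - ·) (congrArg (c • ·) ?_) (congrArg (c • ·) ?_)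
          · rw [show (X 0 ^ 15 : MvPolynomial (Fin 2) k) = mon k 15 0 by simp [mon],
              mon_mul_mon, add_zero]
          · rw [show (X 1 ^ 15 : MvPolynomial (Fin 2) k) = mon k 0 15 by simp [mon],
              mon_mul_mon, add_zero]
        rw [this, map_sub, map_smul, map_smul, phi_mon, phi_mon, rep_bin, sub_self]
  have H : ∀ g, phi k q (g * z) = 0 := by
    refine Submodule.span_induction (p := fun z _ => ∀ g, phi k q (g * z) = 0)
      ?_ ?_ ?_ ?_ hz
    · intro x hx g; exact key g x hx
    · intro g; rw [mul_zero, map_zero]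
    · intro x y _ _ ihx ihy g; rw [mul_add, map_add, ihx, ihy, add_zero]
    · intro a x _ ih g; rw [smul_eq_mul, ← mul_assoc]; exact ih (g * a)
  simpa using H 1

end Stmt7Aux

namespace Stmt7Aux
variable {k : Type*} [Field k]

variable (k) in
def mkL (q : ℕ) : MvPolynomial (Fin 2) k →ₗ[k] (MvPolynomial (Fin 2) k ⧸ Igen k q) :=
  (Ideal.Quotient.mkₐ k (Igen k q)).toLinearMap

lemma mkL_apply (q : ℕ) (x : MvPolynomial (Fin 2) k) :
    mkL k q x = Ideal.Quotient.mk (Igen k q) x := rfl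

variable (k) in
def psi (q : ℕ) : (↥(SS q) → k) →ₗ[k] (MvPolynomial (Fin 2) k ⧸ Igen k q) :=
  Fintype.linearCombination k fun s : ↥(SS q) => mkL k q (mon k s.1.1 s.1.2)

lemma psi_single (q : ℕ) (s : ↥(SS q)) :
    psi k q (Pi.single s 1) = mkL k q (mon k s.1.1 s.1.2) := by
  rw [psi, Fintype.linearCombination_apply_single, one_smul]

lemma bin_mem (q : ℕ) : ((X 0 : MvPolynomial (Fin 2) k) ^ 15 - X 1 ^ 15) ∈ Igen k q :=
  Ideal.subset_span (by simp)

lemma mk_bin (q a b : ℕ) :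
    mkL k q (mon k (a + 15) b) = mkL k q (mon k a (b + 15)) := by
  rw [mkL_apply, mkL_apply, Ideal.Quotient.mk_eq_mk_iff_sub_mem]
  have : mon k (a + 15) b - mon k a (b + 15)
      = mon k a b * (X 0 ^ 15 - X 1 ^ 15) := by
    simp only [mon, pow_add]; ring
  rw [this]
  exact Ideal.mul_mem_left _ _ (bin_mem q)

lemma mk_x_zero (q a b : ℕ) (h : q ≤ a) : mkL k q (mon k a b) = 0 := by
  rw [mkL_apply, Ideal.Quotient.eq_zero_iff_mem]
  have : mon k a b = (X 0 ^ (a - q) * X 1 ^ b) * X 0 ^ q := by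
    rw [mon]
    conv_lhs => rw [show a = (a - q) + q by omega, pow_add]
    ring
  rw [this]
  exact Ideal.mul_mem_left _ _ (Ideal.subset_span (by simp))

lemma mk_y_zero (q a b : ℕ) (h : q ≤ b) : mkL k q (mon k a b) = 0 := by
  rw [mkL_apply, Ideal.Quotient.eq_zero_iff_mem]
  have : mon k a b = (X 0 ^ a * X 1 ^ (b - q)) * X 1 ^ q := by
    rw [mon]
    conv_lhs => rw [show b = (b - q) + q by omega, pow_add]
    ring
  rw [this]
  exact Ideal.mul_mem_left _ _ (Ideal.subset_span (by simp))

lemma dead_x (q : ℕ) : ∀ b a : ℕ, q ≤ a + 15 * (b / 15) → mkL k q (mon k a b) = 0 := by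
  intro b
  induction b using Nat.strong_induction_on with
  | _ b ih =>
    intro a h
    rcases le_or_gt q a with hq | hq
    · exact mk_x_zero q a b hq
    · have hb : 15 ≤ b := by omega
      have hbe : mon k a b = mon k a ((b - 15) + 15) := by rw [Nat.sub_add_cancel hb]
      rw [hbe, ← mk_bin]
      exact ih (b - 15) (by omega) (a + 15) (by omega)

lemma reach (q : ℕ) : ∀ a b : ℕ, mkL k q (mon k a b) ∈ LinearMap.range (psi k q) := by
  intro a
  induction a using Nat.strong_induction_on with
  | _ a ih =>
    intro b
    rcases le_or_gt q a with h | h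
    · rw [mk_x_zero q a b h]; exact zero_mem _
    rcases le_or_gt 15 a with h15 | h15
    · have hae : mon k a b = mon k ((a - 15) + 15) b := by rw [Nat.sub_add_cancel h15]
      rw [hae, mk_bin]
      exact ih (a - 15) (by omega) (b + 15)
    rcases le_or_gt q b with hb | hb
    · rw [mk_y_zero q a b hb]; exact zero_mem _
    rcases le_or_gt q (a + 15 * (b / 15)) with hd | hd
    · rw [dead_x q b a hd]; exact zero_mem _
    · have hs : (a, b) ∈ SS q := mem_SS.mpr ⟨h15, hb, hd⟩
      exact ⟨Pi.single (⟨(a, b), hs⟩ : ↥(SS q)) 1, psi_single q _⟩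

lemma psi_surj (q : ℕ) : Function.Surjective (psi k q) := by
  rw [← LinearMap.range_eq_top, eq_top_iff]
  rintro z -
  obtain ⟨p, rfl⟩ := Ideal.Quotient.mk_surjective z
  rw [← mkL_apply]
  induction p using MvPolynomial.induction_on' with
  | add u v ihu ihv => rw [map_add]; exact add_mem ihu ihv
  | monomial m c =>
    have hmc : (monomial m c : MvPolynomial (Fin 2) k) = c • mon k (m 0) (m 1) := by
      rw [← monomial_eq_mon, smul_monomial, smul_eq_mul, mul_one]
    rw [hmc, map_smul]
    exact Submodule.smul_mem _ _ (reach q _ _)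

lemma psi_inj (q : ℕ) : Function.Injective (psi k q) := by
  rw [← LinearMap.ker_eq_bot, Submodule.eq_bot_iff]
  intro v hv
  rw [LinearMap.mem_ker] at hv
  set P : MvPolynomial (Fin 2) k := ∑ s : ↥(SS q), v s • mon k s.1.1 s.1.2 with hP
  have hmk : mkL k q P = psi k q v := by
    rw [hP, map_sum, psi, Fintype.linearCombination_apply]
    simp_rw [map_smul]
  have hPmem : P ∈ Igen k q := by
    rw [← Ideal.Quotient.eq_zero_iff_mem, ← mkL_apply, hmk, hv]
  have hphiP : phi k q P = v := by
    rw [hP, map_sum]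
    have hterm : ∀ s : ↥(SS q), phi k q (v s • mon k s.1.1 s.1.2) = Pi.single s (v s) := by
      rintro ⟨⟨a, b⟩, hs⟩
      have hm := mem_SS.mp hs
      have hrep : rep a b = (a, b) := by
        rw [rep, Prod.mk.injEq]
        refine ⟨by omega, by omega⟩
      rw [map_smul, phi_mon, hrep, FF, dif_pos hs]
      ext t
      simp [Pi.single_apply]
    simp_rw [hterm]
    exact Finset.univ_sum_single v
  rw [← hphiP]
  exact phi_vanish q hPmem

lemma finrank_eq_card (q : ℕ) :
    Module.finrank k (MvPolynomial (Fin 2) k ⧸ Igen k q) = (SS q).card := by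
  have e := LinearEquiv.ofBijective (psi k q) ⟨psi_inj q, psi_surj q⟩
  rw [← e.finrank_eq, Module.finrank_fintype_fun_eq_card, Fintype.card_coe]

end Stmt7Aux

namespace Stmt7Aux

lemma card_SS (q : ℕ) :
    (SS q).card = (q % 15) * q + (15 - q % 15) * (15 * (q / 15)) := by
  have hfib : ∀ v ∈ SS q, Prod.fst v ∈ Finset.range 15 := by
    intro v hv
    rw [Finset.mem_range]
    exact (mem_SS.mp hv).1
  rw [Finset.card_eq_sum_card_fiberwise hfib]
  have hcard : ∀ i ∈ Finset.range 15,
      ((SS q).filter fun v => v.1 = i).card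
        = (if i < q % 15 then q else 15 * (q / 15)) := by
    intro i hi
    rw [Finset.mem_range] at hi
    have himg : (SS q).filter (fun v => v.1 = i)
        = (Finset.range (if i < q % 15 then q else 15 * (q / 15))).image
            (fun j => (i, j)) := by
      ext ⟨u, v⟩
      simp only [Finset.mem_filter, Finset.mem_image, Finset.mem_range, mem_SS,
        Prod.mk.injEq]
      constructor
      · rintro ⟨⟨h1, h2, h3⟩, rfl⟩
        exact ⟨v, by split_ifs <;> omega, rfl, rfl⟩
      · rintro ⟨j, hj, rfl, rfl⟩
        split_ifs at hj <;> exact ⟨⟨by omega, by omega, by omega⟩, rfl⟩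
    rw [himg, Finset.card_image_of_injective _ (fun x y h => (Prod.mk.injEq _ _ _ _).mp h |>.2),
      Finset.card_range]
  rw [Finset.sum_congr rfl hcard, Finset.sum_ite, Finset.sum_const, Finset.sum_const]
  have h1 : ((Finset.range 15).filter (fun i => i < q % 15)).card = q % 15 := by
    have : ((Finset.range 15).filter (fun i => i < q % 15)) = Finset.range (q % 15) := by
      ext x
      simp only [Finset.mem_filter, Finset.mem_range]
      omega
    rw [this, Finset.card_range]
  have h2 : ((Finset.range 15).filter (fun i => ¬ i < q % 15)).card = 15 - q % 15 := by
    have := Finset.card_filter_add_card_filter_not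
      (s := Finset.range 15) (p := fun i => i < q % 15)
    rw [Finset.card_range] at this
    omega
  rw [h1, h2, smul_eq_mul, smul_eq_mul]

lemma dim_formula (k : Type*) [Field k] (q : ℕ) :
    Module.finrank k (MvPolynomial (Fin 2) k ⧸
        Ideal.span {(X 0 : MvPolynomial (Fin 2) k) ^ q, X 1 ^ q, X 0 ^ 15 - X 1 ^ 15})
      = (q % 15) * q + (15 - q % 15) * (15 * (q / 15)) := by
  rw [show (Ideal.span {(X 0 : MvPolynomial (Fin 2) k) ^ q, X 1 ^ q, X 0 ^ 15 - X 1 ^ 15})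
      = Igen k q from rfl, finrank_eq_card, card_SS]

lemma pow_mod15 (p e : ℕ) (hpmod : p % 15 = 2 ∨ p % 15 = 13) :
    p ^ e % 15 = (p % 15) ^ (e % 4) % 15 := by
  conv_lhs => rw [← Nat.div_add_mod e 4, pow_add, pow_mul]
  rw [Nat.mul_mod, Nat.pow_mod (p ^ 4), Nat.pow_mod p 4, Nat.pow_mod p (e % 4)]
  rcases hpmod with h | h <;> rw [h] <;> norm_num

end Stmt7Aux

/-- The period-4 example: for `p ≡ ±2 (mod 15)`, the `k`-dimension of
`k[X,Y]/(X^{p^e}, Y^{p^e}, X^15 - Y^15)` is `15p^e - 14`, `15p^e - 26`,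
`15p^e - 44`, or `15p^e - 56` according as `e ≡ 0, 1, 2, 3 (mod 4)`. -/
theorem stmt7 {k : Type*} [Field k] (p : ℕ) (hp : p.Prime) [CharP k p]
    (hpmod : p % 15 = 2 ∨ p % 15 = 13) (e : ℕ) :
    (e % 4 = 0 →
      (Module.finrank k (MvPolynomial (Fin 2) k ⧸
        Ideal.span {(X 0 : MvPolynomial (Fin 2) k) ^ p ^ e, X 1 ^ p ^ e,
          X 0 ^ 15 - X 1 ^ 15}) : ℤ) = 15 * (p : ℤ) ^ e - 14) ∧
    (e % 4 = 1 →
      (Module.finrank k (MvPolynomial (Fin 2) k ⧸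
        Ideal.span {(X 0 : MvPolynomial (Fin 2) k) ^ p ^ e, X 1 ^ p ^ e,
          X 0 ^ 15 - X 1 ^ 15}) : ℤ) = 15 * (p : ℤ) ^ e - 26) ∧
    (e % 4 = 2 →
      (Module.finrank k (MvPolynomial (Fin 2) k ⧸
        Ideal.span {(X 0 : MvPolynomial (Fin 2) k) ^ p ^ e, X 1 ^ p ^ e,
          X 0 ^ 15 - X 1 ^ 15}) : ℤ) = 15 * (p : ℤ) ^ e - 44) ∧
    (e % 4 = 3 →
      (Module.finrank k (MvPolynomial (Fin 2) k ⧸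
        Ideal.span {(X 0 : MvPolynomial (Fin 2) k) ^ p ^ e, X 1 ^ p ^ e,
          X 0 ^ 15 - X 1 ^ 15}) : ℤ) = 15 * (p : ℤ) ^ e - 56) := by
  have hc : ((p ^ e : ℕ) : ℤ) = (p : ℤ) ^ e := by push_cast; ring
  refine ⟨fun he => ?_, fun he => ?_, fun he => ?_, fun he => ?_⟩ <;>
  · have hm := Stmt7Aux.pow_mod15 p e hpmod
    rw [he] at hm
    rw [Stmt7Aux.dim_formula k (p ^ e)]
    rcases hpmod with h | h <;> rw [h] at hm <;> norm_num at hm <;>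
      rw [hm, ← hc] <;> omega
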